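/- arXiv:1405.3341 — 3 statements merged into one kernel-verified Lean document; each statement's English description precedes it below -/
import Mathlib

section
/- If a set B of edges of K6 contains, for every pair of vertex-disjoint triangles (S,T), at least one bridge of (S,T), then B contains at least 3 distinct edges. -/
/-- An edge `b` is a bridge of the pair of disjoint triangles `(S,T)` if it has
one endpoint in `S` and the other in `T`. -/
def IsBridge (b S T : Finset (Fin 6)) : Prop :=
  ∃ i ∈ S, ∃ j ∈ T, b = {i, j}

set_option maxHeartbeats 1000000 in
/-- For any two (possibly degenerate) edges, there is a triangle `S` such that
each edge lies entirely inside `S` or inside its complement. -/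
lemma k6_split_aux : ∀ a b c d : Fin 6, ∃ S : Finset (Fin 6), S.card = 3 ∧
    (({a, b} : Finset (Fin 6)) ⊆ S ∨ ({a, b} : Finset (Fin 6)) ⊆ Sᶜ) ∧
    (({c, d} : Finset (Fin 6)) ⊆ S ∨ ({c, d} : Finset (Fin 6)) ⊆ Sᶜ) := by
  decide

/-- Any set of edges of K6 bridging all pairs of disjoint triangles has at
least 3 elements. -/
theorem k6_bridge_system_has_at_least_three_edges (B : Finset (Finset (Fin 6)))
    (hedge : ∀ b ∈ B, b.card = 2)
    (hbridge : ∀ S T : Finset (Fin 6), S.card = 3 → T.card = 3 → Disjoint S T →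
      ∃ b ∈ B, IsBridge b S T) :
    3 ≤ B.card := by
  by_contra h
  push_neg at h
  -- First, B is nonempty (otherwise any pair of triangles gives a contradiction)
  rcases B.eq_empty_or_nonempty with hB | ⟨e₁, he₁⟩
  · obtain ⟨b, hb, -⟩ := hbridge {0, 1, 2} {3, 4, 5} (by decide) (by decide) (by decide)
    simp [hB] at hb
  -- Every element of B is e₁ or e₂ for some e₂ ∈ B
  obtain ⟨e₂, he₂, hall⟩ : ∃ e₂ ∈ B, ∀ b ∈ B, b = e₁ ∨ b = e₂ := by
    by_cases hone : ∀ b ∈ B, b = e₁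
    · exact ⟨e₁, he₁, fun b hb => Or.inl (hone b hb)⟩
    · push_neg at hone
      obtain ⟨e₂, he₂, hne⟩ := hone
      refine ⟨e₂, he₂, fun b hb => ?_⟩
      by_contra hcon
      push_neg at hcon
      have h3 : ({e₁, e₂, b} : Finset (Finset (Fin 6))) ⊆ B := by
        intro x hx
        simp only [Finset.mem_insert, Finset.mem_singleton] at hx
        rcases hx with rfl | rfl | rfl <;> assumption
      have hcard : ({e₁, e₂, b} : Finset (Finset (Fin 6))).card = 3 := by
        rw [Finset.card_insert_of_notMem, Finset.card_insert_of_notMem,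
          Finset.card_singleton]
        · simpa using fun hh => hcon.2 hh.symm
        · simp only [Finset.mem_insert, Finset.mem_singleton]
          push_neg
          exact ⟨fun hh => hne hh.symm, fun hh => hcon.1 hh.symm⟩
      have := Finset.card_le_card h3
      omega
  -- Extract endpoints
  obtain ⟨a, b, hab, rfl⟩ := Finset.card_eq_two.mp (hedge e₁ he₁)
  obtain ⟨c, d, hcd, rfl⟩ := Finset.card_eq_two.mp (hedge e₂ he₂)
  obtain ⟨S, hS3, h1, h2⟩ := k6_split_aux a b c d
  have hScompl : (Sᶜ : Finset (Fin 6)).card = 3 := by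
    rw [Finset.card_compl, hS3]; rfl
  obtain ⟨e, he, i, hi, j, hj, hij⟩ := hbridge S Sᶜ hS3 hScompl disjoint_compl_right
  have hiS : i ∈ S := hi
  have hjS : j ∉ S := by simpa using hj
  have key : ∀ t : Finset (Fin 6), t ⊆ S ∨ t ⊆ Sᶜ → e = t → False := by
    rintro t ht rfl
    rcases ht with ht | ht
    · exact hjS (ht (by rw [hij]; simp))
    · have : i ∈ Sᶜ := ht (by rw [hij]; simp)
      simp at this
      exact this hiS
  rcases hall e he with rfl | rfl
  · exact key _ h1 rfl
  · exact key _ h2 rfl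
end

section
/- Let f_1,...,f_p ∈ ℝ^n and w ∈ ℝ^n satisfy ⟨f_i, w⟩ ≥ 0 for all i, with equality holding for exactly two indices j ≠ k, and suppose f_j and f_k are linearly independent. Then there exists w' ∈ ℝ^n with ⟨f_i, w'⟩ > 0 for all i = 1,...,p. -/
open scoped RealInnerProductSpace

/-- Perturbation step: if w lies in the closed cone, on exactly the two
hyperplanes of f j and f k, which are linearly independent, then the open
cone is nonempty. -/
theorem open_cone_nonempty_of_two_tight_independent (n p : ℕ)
    (f : Fin p → EuclideanSpace ℝ (Fin n)) (w : EuclideanSpace ℝ (Fin n))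
    (j k : Fin p) (hjk : j ≠ k)
    (hj : ⟪f j, w⟫ = 0) (hk : ⟪f k, w⟫ = 0)
    (hpos : ∀ i, i ≠ j → i ≠ k → 0 < ⟪f i, w⟫)
    (hindep : LinearIndependent ℝ ![f j, f k]) :
    ∃ w' : EuclideanSpace ℝ (Fin n), ∀ i, 0 < ⟪f i, w'⟫ := by
  classical
  rw [LinearIndependent.pair_iff] at hindep
  have hk0 : f k ≠ 0 := fun h => by
    simpa [h] using hindep 0 1
  have hj0 : f j ≠ 0 := fun h => by
    simpa [h] using hindep 1 0
  have hnmul : ∀ r : ℝ, f j ≠ r • f k := by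
    intro r h
    have := hindep 1 (-r) (by simp [h])
    simpa using this.1
  set A : ℝ := ⟪f j, f j⟫ with hA
  set B : ℝ := ⟪f j, f k⟫ with hB
  set C : ℝ := ⟪f k, f k⟫ with hC
  have hBlt : |B| < ‖f j‖ * ‖f k‖ := by
    rcases lt_or_eq_of_le (abs_real_inner_le_norm (f j) (f k)) with h | h
    · exact h
    · exfalso
      have h' : ‖⟪f k, f j⟫‖ = ‖f k‖ * ‖f j‖ := by
        rw [real_inner_comm]
        simpa [Real.norm_eq_abs, mul_comm] using h
      obtain ⟨r, _, hr⟩ := (norm_inner_eq_norm_iff (𝕜 := ℝ) hk0 hj0).mp h'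
      exact hnmul r hr
  have hd : B ^ 2 < A * C := by
    have hAC : A * C = (‖f j‖ * ‖f k‖) ^ 2 := by
      rw [hA, hC, real_inner_self_eq_norm_sq, real_inner_self_eq_norm_sq]; ring
    rw [hAC, ← sq_abs B]
    exact pow_lt_pow_left₀ hBlt (abs_nonneg _) (by norm_num)
  set d : ℝ := A * C - B ^ 2 with hdd
  have hd0 : 0 < d := by simpa [hdd] using sub_pos.mpr hd
  set u : EuclideanSpace ℝ (Fin n) := ((C - B) / d) • f j + ((A - B) / d) • f k with hu
  have hB' : (⟪f k, f j⟫ : ℝ) = B := by rw [real_inner_comm]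
  have hju : ⟪f j, u⟫ = 1 := by
    rw [hu, inner_add_right, real_inner_smul_right, real_inner_smul_right, ← hA, ← hB]
    field_simp
    ring
  have hku : ⟪f k, u⟫ = 1 := by
    rw [hu, inner_add_right, real_inner_smul_right, real_inner_smul_right, hB', ← hC]
    field_simp
    ring
  -- choose a small ε
  set g : Fin p → ℝ := fun i =>
    if i = j ∨ i = k then 1 else ⟪f i, w⟫ / (|⟪f i, u⟫| + 1) with hg
  have hgpos : ∀ i, 0 < g i := by
    intro i
    rw [hg]
    by_cases h : i = j ∨ i = k
    · simp [h]
    · simp only [if_neg h]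
      rw [not_or] at h
      have habs : (0:ℝ) ≤ |⟪f i, u⟫| := abs_nonneg _
      exact div_pos (hpos i h.1 h.2) (by linarith)
  have hne : (Finset.univ : Finset (Fin p)).Nonempty := ⟨j, Finset.mem_univ j⟩
  set ε : ℝ := Finset.univ.inf' hne g with hε
  have hε0 : 0 < ε := by
    rw [hε, Finset.lt_inf'_iff]
    exact fun i _ => hgpos i
  have hεle : ∀ i, ε ≤ g i := fun i => Finset.inf'_le _ (Finset.mem_univ i)
  refine ⟨w + ε • u, fun i => ?_⟩
  have hexp : ⟪f i, w + ε • u⟫ = ⟪f i, w⟫ + ε * ⟪f i, u⟫ := by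
    rw [inner_add_right, real_inner_smul_right]
  rw [hexp]
  by_cases hij : i = j
  · subst hij; rw [hj, hju]; simpa using hε0
  by_cases hik : i = k
  · subst hik; rw [hk, hku]; simpa using hε0
  · have hgi : g i = ⟪f i, w⟫ / (|⟪f i, u⟫| + 1) := by
      rw [hg]; simp [hij, hik]
    have h1 : ε * (|⟪f i, u⟫| + 1) ≤ ⟪f i, w⟫ := by
      have := hεle i
      rw [hgi] at this
      calc ε * (|⟪f i, u⟫| + 1) ≤ (⟪f i, w⟫ / (|⟪f i, u⟫| + 1)) * (|⟪f i, u⟫| + 1) := by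
            apply mul_le_mul_of_nonneg_right this (by positivity)
        _ = ⟪f i, w⟫ := by field_simp
    have habs : -|⟪f i, u⟫| ≤ (⟪f i, u⟫ : ℝ) := neg_abs_le _
    nlinarith [mul_le_mul_of_nonneg_left habs hε0.le, h1, hε0]
end

section
/- Let f_1,...,f_p ∈ ℝ^n, let w ∈ ℝ^n, and let I = {i : ⟨f_i, w⟩ = 0} with ⟨f_i, w⟩ > 0 for i ∉ I. If the convex cone generated by {f_i : i ∈ I} is strongly convex (contains no nonzero vector together with its negative) and f_i ≠ 0 for i ∈ I, then the open cone {x ∈ ℝ^n : ⟨f_i, x⟩ > 0 for all i = 1,...,p} is nonempty. -/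
open scoped RealInnerProductSpace

/-- If w lies in the closed cone, and the convex cone generated by the tight
vectors (those with ⟨f i, w⟩ = 0) is strongly convex with all tight vectors
nonzero, then the open cone is nonempty. -/
theorem open_cone_nonempty_of_tight_cone_strongly_convex (n p : ℕ)
    (f : Fin p → EuclideanSpace ℝ (Fin n)) (w : EuclideanSpace ℝ (Fin n))
    (hpos : ∀ i, ⟪f i, w⟫ ≠ 0 → 0 < ⟪f i, w⟫)
    (hsc : ∀ y : EuclideanSpace ℝ (Fin n),
      (∃ lam : Fin p → ℝ, (∀ i, 0 ≤ lam i) ∧ (∀ i, ⟪f i, w⟫ ≠ 0 → lam i = 0) ∧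
        y = ∑ i, lam i • f i) →
      (∃ mu : Fin p → ℝ, (∀ i, 0 ≤ mu i) ∧ (∀ i, ⟪f i, w⟫ ≠ 0 → mu i = 0) ∧
        -y = ∑ i, mu i • f i) →
      y = 0)
    (hnz : ∀ i, ⟪f i, w⟫ = 0 → f i ≠ 0) :
    ∃ x : EuclideanSpace ℝ (Fin n), ∀ i, 0 < ⟪f i, x⟫ := by
  classical
  rcases Nat.eq_zero_or_pos p with hp | hp
  · exact ⟨0, fun i => absurd i.2 (by omega)⟩
  set T : Set (EuclideanSpace ℝ (Fin n)) := f '' {i | ⟪f i, w⟫ = 0} with hT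
  have hTfin : T.Finite := (Set.finite_range f).subset (Set.image_subset_range _ _)
  -- Step 1: 0 is not in the convex hull of the tight vectors.
  have h0 : (0 : EuclideanSpace ℝ (Fin n)) ∉ convexHull ℝ T := by
    intro h0
    rw [convexHull_eq] at h0
    obtain ⟨ι, t, wt, z, hw0, hw1, hz, hcm⟩ := h0
    rw [Finset.centerMass_eq_of_sum_1 _ _ hw1] at hcm
    simp only [hT, Set.mem_image, Set.mem_setOf_eq] at hz
    have : Nonempty (Fin p) := ⟨⟨0, hp⟩⟩
    choose! g hg1 hg2 using hz
    set lam : Fin p → ℝ := fun j => ∑ i ∈ t.filter (fun i => g i = j), wt i with hlam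
    have hlam0 : ∀ j, 0 ≤ lam j := fun j =>
      Finset.sum_nonneg fun i hi => hw0 i (Finset.mem_filter.mp hi).1
    have hlamtight : ∀ j, ⟪f j, w⟫ ≠ 0 → lam j = 0 := by
      intro j hj
      apply Finset.sum_eq_zero
      intro i hi
      obtain ⟨hit, hgi⟩ := Finset.mem_filter.mp hi
      exact absurd (hgi ▸ hg1 i hit) hj
    have hlamsum : ∑ j, lam j = 1 := by
      rw [hlam]
      rw [Finset.sum_fiberwise t g wt]
      exact hw1
    have hlamvec : ∑ j, lam j • f j = 0 := by
      have : ∀ j : Fin p, lam j • f j = ∑ i ∈ t.filter (fun i => g i = j), wt i • f (g i) := by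
        intro j
        rw [hlam, Finset.sum_smul]
        apply Finset.sum_congr rfl
        intro i hi
        rw [(Finset.mem_filter.mp hi).2]
      rw [Finset.sum_congr rfl fun j _ => this j, Finset.sum_fiberwise t g (fun i => wt i • f (g i))]
      rw [← hcm]
      apply Finset.sum_congr rfl
      intro i hi
      rw [hg2 i hi]
    -- find an index with positive weight
    have hex : ∃ j0, lam j0 ≠ 0 := by
      by_contra h
      push_neg at h
      simp only [h, Finset.sum_const_zero] at hlamsum
      norm_num at hlamsum
    obtain ⟨j0, hj0⟩ := hex
    have hj0pos : 0 < lam j0 := lt_of_le_of_ne (hlam0 j0) (Ne.symm hj0)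
    have hj0tight : ⟪f j0, w⟫ = 0 := by
      by_contra h
      exact hj0 (hlamtight j0 h)
    set lam1 : Fin p → ℝ := fun j => if j = j0 then lam j0 else 0 with hlam1
    set mu1 : Fin p → ℝ := fun j => if j = j0 then 0 else lam j with hmu1
    have hsum1 : ∑ j, lam1 j • f j = lam j0 • f j0 := by
      rw [Finset.sum_eq_single j0]
      · simp [hlam1]
      · intro b _ hb; simp [hlam1, hb]
      · intro h; exact absurd (Finset.mem_univ j0) h
    have hsum2 : ∑ j, mu1 j • f j = -(lam j0 • f j0) := by
      have h4 : ∀ j, mu1 j • f j = lam j • f j - lam1 j • f j := by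
        intro j
        by_cases hb : j = j0
        · subst hb; simp [hlam1, hmu1]
        · simp [hlam1, hmu1, hb]
      rw [Finset.sum_congr rfl fun j _ => h4 j, Finset.sum_sub_distrib, hlamvec, hsum1]
      abel
    have hy := hsc (lam j0 • f j0)
      ⟨lam1, fun i => by by_cases hb : i = j0 <;> simp [hlam1, hb, hj0pos.le],
       fun i hi => by
         have hb : i ≠ j0 := fun hh => hi (hh ▸ hj0tight)
         simp [hlam1, hb],
       hsum1.symm⟩
      ⟨mu1, fun i => by by_cases hb : i = j0 <;> simp [hmu1, hb, hlam0],
       fun i hi => by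
         by_cases hb : i = j0
         · simp [hmu1, hb]
         · simp [hmu1, hb, hlamtight i hi],
       hsum2.symm⟩
    have : f j0 = 0 := by
      rcases smul_eq_zero.mp hy with h | h
      · exact absurd h hj0
      · exact h
    exact hnz j0 hj0tight this
  -- Step 2: separate 0 from the hull
  obtain ⟨F, u, hF0, hFb⟩ := geometric_hahn_banach_point_closed
    (convex_convexHull ℝ T) (hTfin.isCompact_convexHull (𝕜 := ℝ)).isClosed h0
  have hu : 0 < u := by simpa using hF0
  set v := (InnerProductSpace.toDual ℝ (EuclideanSpace ℝ (Fin n))).symm F with hv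
  have hvF : ∀ b, ⟪v, b⟫ = F b := fun b => InnerProductSpace.toDual_symm_apply
  have hvi : ∀ i, ⟪f i, w⟫ = 0 → 0 < ⟪f i, v⟫ := by
    intro i hi
    have hmem : f i ∈ convexHull ℝ T := subset_convexHull ℝ T ⟨i, hi, rfl⟩
    have := hFb _ hmem
    rw [real_inner_comm, hvF]
    linarith
  -- Step 3: choose ε and conclude
  have hne : (Finset.univ : Finset (Fin p)).Nonempty := ⟨⟨0, hp⟩, Finset.mem_univ _⟩
  set c : Fin p → ℝ := fun i =>
    if ⟪f i, w⟫ = 0 then 1 else ⟪f i, w⟫ / (2 * (|⟪f i, v⟫| + 1)) with hc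
  have hcpos : ∀ i, 0 < c i := by
    intro i
    by_cases h : ⟪f i, w⟫ = 0
    · show (0:ℝ) < if ⟪f i, w⟫ = 0 then 1 else _
      rw [if_pos h]; norm_num
    · show (0:ℝ) < if ⟪f i, w⟫ = 0 then 1 else ⟪f i, w⟫ / (2 * (|⟪f i, v⟫| + 1))
      rw [if_neg h]
      exact div_pos (hpos i h) (by positivity)
  set ε := Finset.univ.inf' hne c with hε
  have hεpos : 0 < ε := (Finset.lt_inf'_iff hne).mpr fun i _ => hcpos i
  refine ⟨w + ε • v, fun i => ?_⟩
  have hexp : ⟪f i, w + ε • v⟫ = ⟪f i, w⟫ + ε * ⟪f i, v⟫ := by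
    rw [inner_add_right, real_inner_smul_right]
  rw [hexp]
  have hεle : ε ≤ c i := Finset.inf'_le _ (Finset.mem_univ i)
  by_cases h : ⟪f i, w⟫ = 0
  · rw [h]
    have := hvi i h
    nlinarith
  · have h1 : 0 < ⟪f i, w⟫ := hpos i h
    have h2 : c i = ⟪f i, w⟫ / (2 * (|⟪f i, v⟫| + 1)) := by
      show (if ⟪f i, w⟫ = 0 then 1 else ⟪f i, w⟫ / (2 * (|⟪f i, v⟫| + 1))) = _
      rw [if_neg h]
    have h3 : ε * (2 * (|⟪f i, v⟫| + 1)) ≤ ⟪f i, w⟫ := by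
      rw [h2] at hεle
      exact (le_div_iff₀ (by positivity)).mp hεle
    nlinarith [abs_nonneg (⟪f i, v⟫ : ℝ), neg_abs_le (⟪f i, v⟫ : ℝ)]
end
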